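/- Let N ≥ 1 and let s be a primitive 2(N+K)-th root of unity in ℂ (or any field of characteristic 0 containing such a root), K ≥ 1. Then ∑_{N+K > l₁ > l₂ > ⋯ > l_N = 0} det(s^{2(i−1)l_j})_{1≤i,j≤N} · det(s^{−2(i−1)l_j})_{1≤i,j≤N} = N·(N+K)^{N−1}, where the sum runs over strictly decreasing sequences N+K > l₁ > ⋯ > l_{N−1} > l_N = 0 of integers. -/

import Mathlib

open Finset

namespace Erl

variable {N M : ℕ}

/-- The summand: product of the determinant and its "conjugate". -/
noncomputable def fdet (ζ : ℂ) {N M : ℕ} (l : Fin N → Fin M) : ℂ :=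
  (Matrix.of fun i j : Fin N => ζ ^ ((i : ℕ) * (l j : ℕ))).det *
  (Matrix.of fun i j : Fin N => ζ ^ (-((i : ℕ) * (l j : ℕ) : ℕ) : ℤ)).det

lemma fdet_comp_perm (ζ : ℂ) (l : Fin N → Fin M) (σ : Equiv.Perm (Fin N)) :
    fdet ζ (l ∘ σ) = fdet ζ l := by
  have h1 : (Matrix.of fun i j : Fin N => ζ ^ ((i : ℕ) * ((l ∘ σ) j : ℕ)))
      = (Matrix.of fun i j : Fin N => ζ ^ ((i : ℕ) * (l j : ℕ))).submatrix id σ := rfl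
  have h2 : (Matrix.of fun i j : Fin N => ζ ^ (-((i : ℕ) * ((l ∘ σ) j : ℕ) : ℕ) : ℤ))
      = (Matrix.of fun i j : Fin N => ζ ^ (-((i : ℕ) * (l j : ℕ) : ℕ) : ℤ)).submatrix id σ := rfl
  rw [fdet, h1, h2, Matrix.det_permute', Matrix.det_permute']
  have hs : ((Equiv.Perm.sign σ : ℤ) : ℂ) * ((Equiv.Perm.sign σ : ℤ) : ℂ) = 1 := by
    rw [← Int.cast_mul, ← Units.val_mul, Int.units_mul_self]; norm_num
  rw [fdet, mul_mul_mul_comm, hs, one_mul]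

lemma fdet_eq_zero (ζ : ℂ) {l : Fin N → Fin M} (hl : ¬ Function.Injective l) :
    fdet ζ l = 0 := by
  rw [Function.not_injective_iff] at hl
  obtain ⟨i, j, hij, hne⟩ := hl
  rw [fdet, Matrix.det_zero_of_column_eq hne (fun k => by simp [hij]), zero_mul]

lemma geom {ζ : ℂ} (hζ : IsPrimitiveRoot ζ M) (t : ℤ) :
    ∑ x : Fin M, ζ ^ (t * (x : ℕ)) = if (M : ℤ) ∣ t then (M : ℂ) else 0 := by
  have hz : ∀ x : Fin M, ζ ^ (t * (x : ℕ)) = (ζ ^ t) ^ (x : ℕ) := by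
    intro x; rw [← zpow_natCast (ζ ^ t), ← zpow_mul]
  simp only [hz]
  by_cases hdvd : (M : ℤ) ∣ t
  · have h1 : ζ ^ t = 1 := (hζ.zpow_eq_one_iff_dvd t).mpr hdvd
    simp [h1, hdvd]
  · rw [if_neg hdvd]
    have h1 : ζ ^ t ≠ 1 := fun h => hdvd ((hζ.zpow_eq_one_iff_dvd t).mp h)
    rw [Fin.sum_univ_eq_sum_range (fun x => (ζ ^ t) ^ x), geom_sum_eq h1]
    have h2 : (ζ ^ t) ^ M = 1 := by
      rw [← zpow_natCast (ζ ^ t), ← zpow_mul, mul_comm, zpow_mul, zpow_natCast, hζ.pow_eq_one,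
        one_zpow]
    rw [h2, sub_self, zero_div]

lemma sum_all {ζ : ℂ} (hζ : IsPrimitiveRoot ζ M) (hNM : N ≤ M) (hM : 0 < M) :
    ∑ l : Fin N → Fin M, fdet ζ l = (N.factorial : ℂ) * (M : ℂ) ^ N := by
  have hne : ζ ≠ 0 := hζ.ne_zero hM.ne'
  have step1 : ∀ l : Fin N → Fin M, fdet ζ l =
      ∑ σ : Equiv.Perm (Fin N), ∑ τ : Equiv.Perm (Fin N),
        (((Equiv.Perm.sign σ : ℤ) : ℂ) * ((Equiv.Perm.sign τ : ℤ) : ℂ)) *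
          ∏ i : Fin N, ζ ^ ((((σ i : ℕ) : ℤ) - ((τ i : ℕ) : ℤ)) * ((l i : ℕ) : ℤ)) := by
    intro l
    rw [fdet, Matrix.det_apply', Matrix.det_apply', Finset.sum_mul_sum]
    refine Finset.sum_congr rfl fun σ _ => Finset.sum_congr rfl fun τ _ => ?_
    rw [mul_mul_mul_comm]
    congr 1
    rw [← Finset.prod_mul_distrib]
    refine Finset.prod_congr rfl fun i _ => ?_
    rw [Matrix.of_apply, Matrix.of_apply, ← zpow_natCast ζ ((σ i : ℕ) * (l i : ℕ)),
      ← zpow_add₀ hne]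
    congr 1; push_cast; ring
  have hcond : ∀ a b : Fin N, ((M : ℤ) ∣ ((a : ℕ) : ℤ) - ((b : ℕ) : ℤ)) ↔ a = b := by
    intro a b
    constructor
    · intro h
      by_contra hab
      have ha := a.isLt; have hb := b.isLt
      have h1 : ((a : ℕ) : ℤ) - ((b : ℕ) : ℤ) ≠ 0 := by
        intro h'
        exact hab (Fin.ext (by omega))
      have h2 : |((a : ℕ) : ℤ) - ((b : ℕ) : ℤ)| < (M : ℤ) := by
        rw [abs_lt]; omega
      have h3 := Int.le_of_dvd (abs_pos.mpr h1) ((dvd_abs _ _).mpr h)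
      omega
    · rintro rfl; simp
  calc ∑ l : Fin N → Fin M, fdet ζ l
      = ∑ σ : Equiv.Perm (Fin N), ∑ τ : Equiv.Perm (Fin N),
          (((Equiv.Perm.sign σ : ℤ) : ℂ) * ((Equiv.Perm.sign τ : ℤ) : ℂ)) *
          ∑ l : Fin N → Fin M,
            ∏ i : Fin N, ζ ^ ((((σ i : ℕ) : ℤ) - ((τ i : ℕ) : ℤ)) * ((l i : ℕ) : ℤ)) := by
        simp only [step1]
        rw [Finset.sum_comm]
        refine Finset.sum_congr rfl fun σ _ => ?_
        rw [Finset.sum_comm]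
        refine Finset.sum_congr rfl fun τ _ => ?_
        rw [← Finset.mul_sum]
    _ = ∑ σ : Equiv.Perm (Fin N), ∑ τ : Equiv.Perm (Fin N),
          (((Equiv.Perm.sign σ : ℤ) : ℂ) * ((Equiv.Perm.sign τ : ℤ) : ℂ)) *
          (if σ = τ then (M : ℂ) ^ N else 0) := by
        refine Finset.sum_congr rfl fun σ _ => Finset.sum_congr rfl fun τ _ => ?_
        congr 1
        rw [← Fintype.piFinset_univ, Finset.sum_prod_piFinset (univ : Finset (Fin M))
          (fun i x => ζ ^ ((((σ i : ℕ) : ℤ) - ((τ i : ℕ) : ℤ)) * ((x : ℕ) : ℤ)))]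
        have : ∀ i : Fin N, ∑ x : Fin M,
            ζ ^ ((((σ i : ℕ) : ℤ) - ((τ i : ℕ) : ℤ)) * ((x : ℕ) : ℤ))
            = if σ i = τ i then (M : ℂ) else 0 := by
          intro i
          rw [geom hζ (((σ i : ℕ) : ℤ) - ((τ i : ℕ) : ℤ))]
          simp only [hcond]
        simp only [this]
        by_cases h : σ = τ
        · subst h
          simp [Finset.prod_const, Finset.card_univ]
        · rw [if_neg h]
          have : ∃ i, σ i ≠ τ i := by
            by_contra h'
            push_neg at h'
            exact h (Equiv.ext h')
          obtain ⟨i, hi⟩ := this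
          exact Finset.prod_eq_zero (Finset.mem_univ i) (if_neg hi)
    _ = (N.factorial : ℂ) * (M : ℂ) ^ N := by
        have : ∀ σ : Equiv.Perm (Fin N), ∑ τ : Equiv.Perm (Fin N),
            (((Equiv.Perm.sign σ : ℤ) : ℂ) * ((Equiv.Perm.sign τ : ℤ) : ℂ)) *
            (if σ = τ then (M : ℂ) ^ N else 0) = (M : ℂ) ^ N := by
          intro σ
          rw [Finset.sum_eq_single σ]
          · rw [if_pos rfl, ← Int.cast_mul, ← Units.val_mul, Int.units_mul_self]
            norm_num
          · intro τ _ hτ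
            rw [if_neg (Ne.symm hτ), mul_zero]
          · intro h; exact absurd (Finset.mem_univ σ) h
        simp only [this]
        rw [Finset.sum_const, Finset.card_univ, Fintype.card_perm, Fintype.card_fin,
          nsmul_eq_mul]

/-! ### Sorting decreasing sequences -/

def Dec {N M : ℕ} (l : Fin N → Fin M) : Prop := ∀ i j : Fin N, i < j → l j < l i

instance {N M : ℕ} : DecidablePred (Dec (N := N) (M := M)) := fun _ => by
  unfold Dec; infer_instance

lemma Dec.strictAnti {l : Fin N → Fin M} (h : Dec l) : StrictAnti l := fun i j hij => h i j hij

lemma Dec.injective {l : Fin N → Fin M} (h : Dec l) : Function.Injective l :=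
  h.strictAnti.injective

lemma card_image_eq {l : Fin N → Fin M} (hl : Function.Injective l) :
    (image l univ).card = N := by
  rw [Finset.card_image_of_injective _ hl, card_univ, Fintype.card_fin]

noncomputable def sortd (l : Fin N → Fin M) : Fin N → Fin M :=
  if h : (image l univ).card = N then fun j => (image l univ).orderEmbOfFin h j.rev else l

lemma sortd_of_inj {l : Fin N → Fin M} (hl : Function.Injective l) :
    sortd l = fun j => (image l univ).orderEmbOfFin (card_image_eq hl) j.rev :=
  dif_pos (card_image_eq hl)

lemma image_comp_perm (l : Fin N → Fin M) (σ : Equiv.Perm (Fin N)) :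
    image (l ∘ σ) univ = image l univ := by
  apply Finset.coe_injective
  rw [coe_image, coe_image, coe_univ, Set.image_univ, Set.image_univ, Set.range_comp,
    Equiv.range_eq_univ, Set.image_univ]

lemma image_sortd {l : Fin N → Fin M} (hl : Function.Injective l) :
    image (sortd l) univ = image l univ := by
  rw [sortd_of_inj hl]
  apply Finset.coe_injective
  rw [coe_image, coe_univ, Set.image_univ]
  have : (fun j : Fin N => (image l univ).orderEmbOfFin (card_image_eq hl) j.rev)
      = ((image l univ).orderEmbOfFin (card_image_eq hl)) ∘ Fin.rev := rfl
  rw [this, Set.range_comp, Fin.rev_surjective.range_eq, Set.image_univ,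
    Finset.range_orderEmbOfFin]

lemma sortd_dec {l : Fin N → Fin M} (hl : Function.Injective l) : Dec (sortd l) := by
  rw [sortd_of_inj hl]
  intro i j hij
  exact ((image l univ).orderEmbOfFin (card_image_eq hl)).strictMono (Fin.rev_lt_rev.mpr hij)

lemma sortd_eq_self {d : Fin N → Fin M} (hd : Dec d) : sortd d = d := by
  have hinj := hd.injective
  have hu : (fun x : Fin N => d x.rev) = (image d univ).orderEmbOfFin (card_image_eq hinj) := by
    apply Finset.orderEmbOfFin_unique
    · intro x; exact Finset.mem_image_of_mem d (mem_univ _)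
    · intro x y hxy
      exact hd _ _ (Fin.rev_lt_rev.mpr hxy)
  rw [sortd_of_inj hinj, ← hu]
  funext j
  show d j.rev.rev = d j
  rw [Fin.rev_rev]

lemma sortd_comp_perm {d : Fin N → Fin M} (hd : Function.Injective d) (σ : Equiv.Perm (Fin N)) :
    sortd (d ∘ σ) = sortd d := by
  rw [sortd_of_inj (hd.comp σ.injective), sortd_of_inj hd]
  simp only [image_comp_perm]

/-- Master lemma: a sum of a symmetric function over injective tuples (satisfying an
image-invariant condition) equals `N!` times the sum over strictly decreasing tuples. -/
lemma sum_inj_eq {f : (Fin N → Fin M) → ℂ}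
    (hf : ∀ (l : Fin N → Fin M) (σ : Equiv.Perm (Fin N)), f (l ∘ σ) = f l)
    (p : (Fin N → Fin M) → Prop) [DecidablePred p]
    (hp : ∀ (l l' : Fin N → Fin M), image l univ = image l' univ → (p l → p l')) :
    ∑ l ∈ univ.filter (fun l => Function.Injective l ∧ p l), f l
      = (N.factorial : ℂ) * ∑ l ∈ univ.filter (fun l => Dec l ∧ p l), f l := by
  have maps : ∀ l ∈ univ.filter (fun l : Fin N → Fin M => Function.Injective l ∧ p l),
      sortd l ∈ univ.filter (fun l => Dec l ∧ p l) := by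
    intro l hl
    rw [mem_filter] at hl ⊢
    obtain ⟨-, hinj, hpl⟩ := hl
    exact ⟨mem_univ _, sortd_dec hinj, hp l (sortd l) (image_sortd hinj).symm hpl⟩
  rw [← Finset.sum_fiberwise_of_maps_to maps f, Finset.mul_sum]
  refine Finset.sum_congr rfl fun d hd => ?_
  rw [mem_filter] at hd
  obtain ⟨-, hD, hpd⟩ := hd
  have hfib : (univ.filter (fun l : Fin N → Fin M => Function.Injective l ∧ p l)).filter
      (fun l => sortd l = d) = image (fun σ : Equiv.Perm (Fin N) => d ∘ σ) univ := by
    ext l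
    simp only [mem_filter, mem_univ, true_and, mem_image]
    constructor
    · rintro ⟨⟨hinj, hpl⟩, hs⟩
      have him : Set.range l = Set.range d := by
        have h1 : image l univ = image d univ := by rw [← hs, image_sortd hinj]
        have := congrArg (fun t : Finset (Fin M) => (t : Set (Fin M))) h1
        rwa [coe_image, coe_image, coe_univ, Set.image_univ, Set.image_univ] at this
      refine ⟨(Equiv.ofInjective l hinj).trans
        ((Equiv.setCongr him).trans (Equiv.ofInjective d hD.injective).symm), ?_⟩
      funext j
      simp only [Equiv.trans_apply, Function.comp_apply, Equiv.apply_ofInjective_symm]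
      rfl
    · rintro ⟨σ, rfl⟩
      refine ⟨⟨hD.injective.comp σ.injective, ?_⟩, ?_⟩
      · exact hp d (d ∘ σ) (image_comp_perm d σ).symm hpd
      · rw [sortd_comp_perm hD.injective, sortd_eq_self hD]
  have hinj_im : Function.Injective (fun σ : Equiv.Perm (Fin N) => d ∘ σ) := by
    intro σ σ' h
    exact Equiv.ext fun j => hD.injective (congrFun h j)
  rw [hfib, Finset.sum_image (fun a _ b _ h => hinj_im h)]
  simp only [hf]
  rw [Finset.sum_const, Finset.card_univ, Fintype.card_perm, Fintype.card_fin, nsmul_eq_mul]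

/-! ### Shift invariance -/

lemma pow_mod {ζ : ℂ} (hζ : IsPrimitiveRoot ζ M) (a : ℕ) : ζ ^ (a % M) = ζ ^ a := by
  conv_rhs => rw [← Nat.div_add_mod a M]
  rw [pow_add, pow_mul, hζ.pow_eq_one, one_pow, one_mul]

lemma fdet_shift {ζ : ℂ} (hζ : IsPrimitiveRoot ζ M) (hM : 0 < M) (c : Fin M)
    (l : Fin N → Fin M) : fdet ζ (fun j => l j + c) = fdet ζ l := by
  have hne : ζ ≠ 0 := hζ.ne_zero hM.ne'
  have key : ∀ i j : Fin N, ζ ^ ((i : ℕ) * ((l j + c : Fin M) : ℕ))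
      = ζ ^ ((i : ℕ) * (c : ℕ)) * ζ ^ ((i : ℕ) * (l j : ℕ)) := by
    intro i j
    rw [Fin.val_add, pow_mul', pow_mod hζ, ← pow_mul', mul_add, pow_add, mul_comm]
  have hA : (Matrix.of fun i j : Fin N => ζ ^ ((i : ℕ) * ((l j + c : Fin M) : ℕ)))
      = Matrix.of (fun i j : Fin N => ζ ^ ((i : ℕ) * (c : ℕ)) *
          (Matrix.of fun i j : Fin N => ζ ^ ((i : ℕ) * (l j : ℕ))) i j) := by
    ext i j; exact key i j
  have hB : (Matrix.of fun i j : Fin N => ζ ^ (-((i : ℕ) * ((l j + c : Fin M) : ℕ) : ℕ) : ℤ))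
      = Matrix.of (fun i j : Fin N => (ζ ^ ((i : ℕ) * (c : ℕ)))⁻¹ *
          (Matrix.of fun i j : Fin N => ζ ^ (-((i : ℕ) * (l j : ℕ) : ℕ) : ℤ)) i j) := by
    ext i j
    rw [Matrix.of_apply, Matrix.of_apply, Matrix.of_apply, zpow_neg, zpow_natCast, key i j,
      zpow_neg, zpow_natCast, mul_inv]
  show fdet ζ (fun j => l j + c) = fdet ζ l
  rw [fdet, hA, hB, Matrix.det_mul_column, Matrix.det_mul_column, mul_mul_mul_comm,
    ← Finset.prod_mul_distrib]
  have h1 : ∀ i : Fin N, ζ ^ ((i : ℕ) * (c : ℕ)) * (ζ ^ ((i : ℕ) * (c : ℕ)))⁻¹ = 1 := by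
    intro i; exact mul_inv_cancel₀ (pow_ne_zero _ hne)
  rw [Finset.prod_congr rfl fun i _ => h1 i, Finset.prod_const_one, one_mul]
  rfl

lemma count_shift [NeZero M] {l : Fin N → Fin M} (hl : Function.Injective l) :
    ∑ c : Fin M, (if (0 : Fin M) ∈ image (fun j => l j + c) univ then (1 : ℂ) else 0)
      = (N : ℂ) := by
  have hiff : ∀ c : Fin M, ((0 : Fin M) ∈ image (fun j => l j + c) univ)
      ↔ c ∈ image (fun j => -(l j)) univ := by
    intro c
    simp only [mem_image, mem_univ, true_and]
    constructor
    · rintro ⟨j, hj⟩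
      exact ⟨j, (neg_eq_of_add_eq_zero_right hj).symm ▸ rfl⟩
    · rintro ⟨j, hj⟩
      exact ⟨j, by rw [← hj, add_neg_cancel]⟩
  simp only [hiff]
  rw [Finset.sum_boole, Finset.filter_mem_eq_inter, Finset.univ_inter,
    Finset.card_image_of_injective _ (fun a b h => hl (neg_injective h)), card_univ,
    Fintype.card_fin]

lemma shift_sum_eq [NeZero M] (c : Fin M) (g : (Fin N → Fin M) → ℂ) :
    ∑ l ∈ univ.filter (fun l : Fin N → Fin M => Function.Injective l),
        g (fun j => l j + c)
      = ∑ l ∈ univ.filter (fun l : Fin N → Fin M => Function.Injective l), g l := by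
  refine Finset.sum_nbij' (fun l => fun j => l j + c) (fun l => fun j => l j + (-c))
    ?_ ?_ ?_ ?_ ?_
  · intro l hl
    rw [mem_filter] at hl ⊢
    exact ⟨mem_univ _, fun a b h => hl.2 (by simpa using congrArg (fun x => x + (-c)) h)⟩
  · intro l hl
    rw [mem_filter] at hl ⊢
    exact ⟨mem_univ _, fun a b h => hl.2 (by simpa using congrArg (fun x => x + c) h)⟩
  · intro l _; funext j; simp
  · intro l _; funext j; simp
  · intro l _; rfl

end Erl

open Erl in
/-- Erlijman-type computation: if `s` is a primitive `2(N+K)`-th root of unity in `ℂ`, then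
`∑ a_l·ā_l = N(N+K)^{N-1}`, the sum running over strictly decreasing sequences
`N+K > l₁ > ⋯ > l_N = 0`, where `a_l = det(s^{2(i-1)l_j})` and `ā_l = det(s^{-2(i-1)l_j})`. -/
theorem sum_det_mul_conj_det (N K : ℕ) (hN : 1 ≤ N) (hK : 1 ≤ K)
    (s : ℂ) (hs : IsPrimitiveRoot s (2 * (N + K))) :
    ∑ l ∈ Finset.univ.filter
        (fun l : Fin N → Fin (N + K) =>
          (∀ i j : Fin N, i < j → l j < l i) ∧ (l ⟨N - 1, by omega⟩ : ℕ) = 0),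
      (Matrix.det (Matrix.of fun i j : Fin N => s ^ (2 * (i : ℕ) * (l j : ℕ))) *
        Matrix.det (Matrix.of fun i j : Fin N => s ^ (-(2 * (i : ℕ) * (l j : ℕ)) : ℤ)))
      = (N : ℂ) * ((N : ℂ) + (K : ℂ)) ^ (N - 1) := by
  set M := N + K with hMdef
  haveI : NeZero M := ⟨by omega⟩
  have hM : 0 < M := by omega
  set ζ := s ^ 2 with hζdef
  have hζ : IsPrimitiveRoot ζ M := hs.pow (by omega) rfl
  have hζne : ζ ≠ 0 := hζ.ne_zero hM.ne'
  -- the summand equals `fdet ζ l`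
  have hsummand : ∀ l : Fin N → Fin M,
      (Matrix.det (Matrix.of fun i j : Fin N => s ^ (2 * (i : ℕ) * (l j : ℕ))) *
        Matrix.det (Matrix.of fun i j : Fin N => s ^ (-(2 * (i : ℕ) * (l j : ℕ)) : ℤ)))
      = fdet ζ l := by
    intro l
    rw [fdet]
    congr 1
    · congr 1; ext i j
      rw [Matrix.of_apply, Matrix.of_apply, hζdef, ← pow_mul, mul_assoc]
    · congr 1; ext i j
      simp only [Matrix.of_apply, hζdef, zpow_neg]
      congr 1
      rw [show (2 * ((i : ℕ) : ℤ) * ((l j : ℕ) : ℤ))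
          = (2 : ℤ) * ((((i : ℕ) * (l j : ℕ) : ℕ)) : ℤ) by push_cast; ring, zpow_mul,
        zpow_natCast]
      norm_num
      norm_cast
  -- condition rewriting
  have hcondit : ∀ l : Fin N → Fin M, Dec l →
      (((l ⟨N - 1, by omega⟩ : Fin M) : ℕ) = 0 ↔ (0 : Fin M) ∈ image l univ) := by
    intro l hD
    constructor
    · intro h
      have : l ⟨N - 1, by omega⟩ = 0 := Fin.ext (by simpa using h)
      exact this ▸ Finset.mem_image_of_mem l (mem_univ _)
    · intro h
      obtain ⟨j, -, hj⟩ := Finset.mem_image.mp h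
      have hjle : j ≤ ⟨N - 1, by omega⟩ := by
        rw [Fin.le_def]
        have := j.isLt; simp; omega
      have hle : l ⟨N - 1, by omega⟩ ≤ l j := by
        rcases lt_or_eq_of_le hjle with h' | h'
        · exact le_of_lt (hD _ _ h')
        · rw [h']
      rw [hj] at hle
      simpa [Fin.le_def] using hle
  -- rewrite the LHS as a sum of fdet over D0
  have hLHS : ∑ l ∈ Finset.univ.filter
        (fun l : Fin N → Fin M =>
          (∀ i j : Fin N, i < j → l j < l i) ∧ (l ⟨N - 1, by omega⟩ : ℕ) = 0),
      (Matrix.det (Matrix.of fun i j : Fin N => s ^ (2 * (i : ℕ) * (l j : ℕ))) *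
        Matrix.det (Matrix.of fun i j : Fin N => s ^ (-(2 * (i : ℕ) * (l j : ℕ)) : ℤ)))
      = ∑ l ∈ univ.filter (fun l : Fin N → Fin M =>
          Dec l ∧ (0 : Fin M) ∈ image l univ), fdet ζ l := by
    rw [Finset.sum_congr ?hfilt (fun l _ => hsummand l)]
    case hfilt =>
      ext l
      simp only [mem_filter, mem_univ, true_and]
      constructor
      · rintro ⟨hD, h0⟩
        exact ⟨hD, (hcondit l hD).mp h0⟩
      · rintro ⟨hD, h0⟩
        exact ⟨hD, (hcondit l hD).mpr h0⟩
  rw [hLHS]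
  -- main computation
  have hSinj : ∑ l ∈ univ.filter (fun l : Fin N → Fin M => Function.Injective l), fdet ζ l
      = (N.factorial : ℂ) * (M : ℂ) ^ N := by
    have h0 := sum_all (N := N) hζ (by omega) hM
    rw [← Finset.sum_filter_add_sum_filter_not univ
      (fun l : Fin N → Fin M => Function.Injective l) (fdet ζ)] at h0
    rw [Finset.sum_eq_zero (fun l hl => fdet_eq_zero ζ (mem_filter.mp hl).2)] at h0
    rw [add_zero] at h0
    exact h0
  set T := ∑ l ∈ univ.filter (fun l : Fin N → Fin M =>
      Function.Injective l ∧ (0 : Fin M) ∈ image l univ), fdet ζ l with hTdef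
  have hT' : T = ∑ l ∈ univ.filter (fun l : Fin N → Fin M => Function.Injective l),
      (if (0 : Fin M) ∈ image l univ then fdet ζ l else 0) := by
    rw [hTdef, ← Finset.filter_filter, Finset.sum_filter]
  have hNS : (N : ℂ) * ((N.factorial : ℂ) * (M : ℂ) ^ N) = (M : ℂ) * T := by
    rw [← hSinj, Finset.mul_sum]
    calc ∑ l ∈ univ.filter (fun l : Fin N → Fin M => Function.Injective l),
            (N : ℂ) * fdet ζ l
        = ∑ l ∈ univ.filter (fun l : Fin N → Fin M => Function.Injective l),
            ∑ c : Fin M, (if (0 : Fin M) ∈ image (fun j => l j + c) univ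
              then fdet ζ l else 0) := by
          refine Finset.sum_congr rfl fun l hl => ?_
          have hinj := (mem_filter.mp hl).2
          rw [← count_shift hinj, Finset.sum_mul]
          refine Finset.sum_congr rfl fun c _ => ?_
          rw [ite_mul, one_mul, zero_mul]
      _ = ∑ c : Fin M, ∑ l ∈ univ.filter (fun l : Fin N → Fin M => Function.Injective l),
            (if (0 : Fin M) ∈ image (fun j => l j + c) univ then fdet ζ l else 0) :=
          Finset.sum_comm
      _ = ∑ c : Fin M, ∑ l ∈ univ.filter (fun l : Fin N → Fin M => Function.Injective l),
            (if (0 : Fin M) ∈ image (fun j => l j + c) univ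
              then fdet ζ (fun j => l j + c) else 0) := by
          refine Finset.sum_congr rfl fun c _ => Finset.sum_congr rfl fun l _ => ?_
          rw [fdet_shift hζ hM c l]
      _ = ∑ c : Fin M, T := by
          refine Finset.sum_congr rfl fun c _ => ?_
          rw [hT']
          exact shift_sum_eq c (fun l => if (0 : Fin M) ∈ image l univ then fdet ζ l else 0)
      _ = (M : ℂ) * T := by
          rw [Finset.sum_const, card_univ, Fintype.card_fin, nsmul_eq_mul]
  have hTD : T = (N.factorial : ℂ) * ∑ l ∈ univ.filter (fun l : Fin N → Fin M =>
      Dec l ∧ (0 : Fin M) ∈ image l univ), fdet ζ l := by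
    rw [hTdef]
    exact sum_inj_eq (fdet_comp_perm ζ) (fun l => (0 : Fin M) ∈ image l univ)
      (fun l l' h hl => by show (0 : Fin M) ∈ image l' univ; rw [← h]; exact hl)
  -- final arithmetic
  have hfac : (N.factorial : ℂ) ≠ 0 := Nat.cast_ne_zero.mpr (Nat.factorial_ne_zero N)
  have hM0 : (M : ℂ) ≠ 0 := Nat.cast_ne_zero.mpr hM.ne'
  have hpow : (M : ℂ) ^ N = (M : ℂ) * (M : ℂ) ^ (N - 1) := by
    conv_lhs => rw [show N = (N - 1) + 1 by omega]
    rw [pow_succ']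
  have hMC : ((N : ℂ) + (K : ℂ)) = (M : ℂ) := by
    rw [hMdef]; push_cast; ring
  rw [hMC]
  apply mul_left_cancel₀ hfac
  apply mul_left_cancel₀ hM0
  rw [hTD] at hNS
  rw [hpow] at hNS
  linear_combination -hNS
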